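/- If $B$ is a random variable taking values in $\{0,1\}$, $T_0, C$ are random variables, and $X, Z$ are random vectors such that $T_0 \perp (C, X) \mid Z$ and $B \perp (C, T_0, Z) \mid X$, then for $T = B T_0 + (1-B) \cdot \infty$ (interpreted via the event $\{T > t\} = \{B = 0\} \cup \{B = 1, T_0 > t\}$), we have $T \perp C \mid (X, Z)$. -/

import Mathlib

open MeasureTheory ProbabilityTheory
open scoped ENNReal NNReal

section Helpers

variable {Ω : Type*} [mΩ : MeasurableSpace Ω]

omit mΩ in
lemma indicator_one_norm_le (s : Set Ω) (x : Ω) :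
    ‖s.indicator (fun _ => (1:ℝ)) x‖ ≤ 1 := by
  by_cases hx : x ∈ s <;> simp [Set.indicator_apply, hx]

omit mΩ in
lemma norm_mul_le_one {a b : ℝ} (ha : ‖a‖ ≤ 1) (hb : ‖b‖ ≤ 1) : ‖a * b‖ ≤ 1 := by
  rw [norm_mul]; nlinarith [norm_nonneg a, norm_nonneg b]

omit mΩ in
lemma comap_proj_le {β γ : Type*} [mβ : MeasurableSpace β] [mγ : MeasurableSpace γ]
    (f : Ω → β) (φ : β → γ) (hφ : Measurable φ) :
    MeasurableSpace.comap (fun a => φ (f a)) mγ ≤ MeasurableSpace.comap f mβ := by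
  rw [show (fun a => φ (f a)) = φ ∘ f from rfl, ← MeasurableSpace.comap_comp]
  exact MeasurableSpace.comap_mono hφ.comap_le

lemma integral_mul_condexp_aux (μ : Measure Ω) [IsFiniteMeasure μ]
    {m : MeasurableSpace Ω} (hm : m ≤ mΩ) {h w : Ω → ℝ}
    (hh : StronglyMeasurable[m] h) {c : ℝ} (hbd : ∀ᵐ x ∂μ, ‖h x‖ ≤ c)
    (hw : Integrable w μ) :
    ∫ x, h x * w x ∂μ = ∫ x, h x * (μ[w|m]) x ∂μ := by
  have hmul : Integrable (h * w) μ :=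
    hw.bdd_mul ((hh.mono hm).aestronglyMeasurable) hbd
  have h1 : μ[h * w|m] =ᵐ[μ] h * μ[w|m] :=
    condExp_stronglyMeasurable_mul_of_bound hm hh hw c hbd
  calc ∫ x, h x * w x ∂μ = ∫ x, (h * w) x ∂μ := rfl
    _ = ∫ x, (μ[h * w|m]) x ∂μ := (integral_condExp hm).symm
    _ = ∫ x, (h * μ[w|m]) x ∂μ := integral_congr_ae h1
    _ = ∫ x, h x * (μ[w|m]) x ∂μ := rfl

lemma setIntegral_eq_integral_indicator_mul (μ : Measure Ω) {s : Set Ω}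
    (hs : MeasurableSet s) (f : Ω → ℝ) :
    ∫ x in s, f x ∂μ = ∫ x, s.indicator (fun _ => (1:ℝ)) x * f x ∂μ := by
  rw [← integral_indicator hs]
  congr 1
  funext x
  by_cases hx : x ∈ s <;> simp [Set.indicator_apply, hx]

/-- Core "weak union" step: if `h ⟂ g ∣ σ(f)`, then
`E[1_{h ∈ E} | σ(f, g)] = E[1_{h ∈ E} | σ(f)]` a.e. -/
lemma condexp_indicator_pair_eq [StandardBorelSpace Ω] [Nonempty Ω]
    {β γ δ : Type*} [mβ : MeasurableSpace β] [mγ : MeasurableSpace γ] [mδ : MeasurableSpace δ]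
    (μ : Measure Ω) [IsProbabilityMeasure μ]
    {f : Ω → β} {g : Ω → γ} {h : Ω → δ}
    (hf : Measurable f) (hg : Measurable g) (hh : Measurable h)
    (hind : CondIndepFun (MeasurableSpace.comap f mβ) hf.comap_le h g μ)
    {E : Set δ} (hE : MeasurableSet E) :
    μ[(h ⁻¹' E).indicator (fun _ => (1:ℝ)) |
        MeasurableSpace.comap (fun ω => (f ω, g ω)) inferInstance]
      =ᵐ[μ] μ[(h ⁻¹' E).indicator (fun _ => (1:ℝ)) | MeasurableSpace.comap f mβ] := by
  have hm12 : MeasurableSpace.comap (fun ω => (f ω, g ω)) inferInstance ≤ mΩ :=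
    (hf.prodMk hg).comap_le
  have hm1 : MeasurableSpace.comap f mβ ≤ mΩ := hf.comap_le
  have hle : MeasurableSpace.comap f mβ
      ≤ MeasurableSpace.comap (fun ω => (f ω, g ω)) inferInstance :=
    comap_proj_le (fun ω => (f ω, g ω)) Prod.fst measurable_fst
  set e : Ω → ℝ := (h ⁻¹' E).indicator (fun _ => (1:ℝ)) with hedef
  have he_int : Integrable e μ := (integrable_const (1:ℝ)).indicator (hh hE)
  set r : Ω → ℝ := μ[e|MeasurableSpace.comap f mβ] with hrdef
  have hr_meas : StronglyMeasurable[MeasurableSpace.comap f mβ] r :=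
    stronglyMeasurable_condExp
  have hr_bd : ∀ᵐ x ∂μ, ‖r x‖ ≤ 1 := by
    have hb : ∀ᵐ x ∂μ, |e x| ≤ ((1:ℝ≥0):ℝ) := by
      filter_upwards with x
      simpa [Real.norm_eq_abs] using indicator_one_norm_le (h ⁻¹' E) x
    filter_upwards [ae_bdd_condExp_of_ae_bdd hb] with x hx
    simpa [Real.norm_eq_abs] using hx
  -- the generating π-system of rectangles
  have hgen : MeasurableSpace.comap (fun ω => (f ω, g ω)) inferInstance
      = MeasurableSpace.generateFrom (Set.preimage (fun ω => (f ω, g ω)) ''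
        (Set.image2 (· ×ˢ ·) { u : Set β | MeasurableSet u } { v : Set γ | MeasurableSet v })) := by
    rw [← generateFrom_prod, MeasurableSpace.comap_generateFrom]
  have hpi : IsPiSystem (Set.preimage (fun ω => (f ω, g ω)) ''
      (Set.image2 (· ×ˢ ·) { u : Set β | MeasurableSet u } { v : Set γ | MeasurableSet v })) := by
    exact (isPiSystem_prod (α := β) (β := γ)).comap (fun ω => (f ω, g ω))
  have key : ∀ ⦃t : Set Ω⦄,
      MeasurableSet[MeasurableSpace.comap (fun ω => (f ω, g ω)) inferInstance] t →
      ∫ x in t, r x ∂μ = ∫ x in t, e x ∂μ := by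
    refine fun t ht => @MeasurableSpace.induction_on_inter Ω
      (MeasurableSpace.comap (fun ω => (f ω, g ω)) inferInstance)
      (fun t _ => ∫ x in t, r x ∂μ = ∫ x in t, e x ∂μ) _ hgen hpi ?_ ?_ ?_ ?_ t ht
    · simp
    · -- basic rectangles
      rintro t ⟨w, ⟨u, hu, v, hv, rfl⟩, rfl⟩
      rw [Set.mk_preimage_prod]
      set U : Ω → ℝ := (f ⁻¹' u).indicator (fun _ => (1:ℝ)) with hUdef
      set V : Ω → ℝ := (g ⁻¹' v).indicator (fun _ => (1:ℝ)) with hVdef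
      have hUmeas : StronglyMeasurable[MeasurableSpace.comap f mβ] U :=
        (stronglyMeasurable_const (β := ℝ)).indicator ⟨u, hu, rfl⟩
      have hV_int : Integrable V μ := (integrable_const (1:ℝ)).indicator (hg hv)
      have hUV : ∀ w' : Ω → ℝ, ∫ x in (f ⁻¹' u ∩ g ⁻¹' v), w' x ∂μ
          = ∫ x, U x * (V x * w' x) ∂μ := by
        intro w'
        rw [← integral_indicator ((hf hu).inter (hg hv))]
        congr 1
        funext x
        by_cases hx1 : x ∈ f ⁻¹' u <;> by_cases hx2 : x ∈ g ⁻¹' v <;>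
          simp [hUdef, hVdef, Set.indicator_apply, hx1, hx2]
      have hVe : (fun x => V x * e x)
          = ((h ⁻¹' E) ∩ (g ⁻¹' v)).indicator (fun _ => (1:ℝ)) := by
        funext x
        by_cases hx1 : x ∈ g ⁻¹' v <;> by_cases hx2 : x ∈ h ⁻¹' E <;>
          simp [hVdef, hedef, Set.indicator_apply, hx1, hx2]
      have hfact : μ[(fun x => V x * e x)|MeasurableSpace.comap f mβ]
          =ᵐ[μ] fun x => r x * (μ[V|MeasurableSpace.comap f mβ]) x := by
        rw [hVe]
        have hcf := (condIndepFun_iff _ hf.comap_le h g hh hg μ).1 hind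
          (h ⁻¹' E) (g ⁻¹' v) ⟨E, hE, rfl⟩ ⟨v, hv, rfl⟩
        filter_upwards [hcf] with x hx
        rw [hx]
        rfl
      have hVe_int : Integrable (fun x => V x * e x) μ := by
        rw [hVe]
        exact (integrable_const (1:ℝ)).indicator ((hh hE).inter (hg hv))
      calc ∫ x in (f ⁻¹' u ∩ g ⁻¹' v), r x ∂μ
          = ∫ x, U x * (V x * r x) ∂μ := hUV r
        _ = ∫ x, (U x * r x) * V x ∂μ :=
            integral_congr_ae (Filter.Eventually.of_forall fun x => by ring)
        _ = ∫ x, (U x * r x) * (μ[V|MeasurableSpace.comap f mβ]) x ∂μ := by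
            refine integral_mul_condexp_aux μ hm1 (hUmeas.mul hr_meas) (c := 1) ?_ hV_int
            filter_upwards [hr_bd] with x hx
            exact norm_mul_le_one (indicator_one_norm_le _ x) hx
        _ = ∫ x, U x * (r x * (μ[V|MeasurableSpace.comap f mβ]) x) ∂μ :=
            integral_congr_ae (Filter.Eventually.of_forall fun x => by ring)
        _ = ∫ x, U x * (μ[(fun x => V x * e x)|MeasurableSpace.comap f mβ]) x ∂μ := by
            refine (integral_congr_ae ?_)
            filter_upwards [hfact] with x hx
            rw [hx]
        _ = ∫ x, U x * (V x * e x) ∂μ := by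
            refine (integral_mul_condexp_aux μ hm1 hUmeas (c := 1) ?_ hVe_int).symm
            filter_upwards with x
            exact indicator_one_norm_le _ x
        _ = ∫ x in (f ⁻¹' u ∩ g ⁻¹' v), e x ∂μ := (hUV e).symm
    · -- complements
      intro t htm iht
      have ht : MeasurableSet t := hm12 _ htm
      have hint_r : Integrable r μ := integrable_condExp
      have h1 := integral_add_compl ht hint_r
      have h2 := integral_add_compl ht he_int
      have h3 : ∫ x, r x ∂μ = ∫ x, e x ∂μ := integral_condExp hm1
      rw [← h3] at h2
      linarith [h1, h2, iht]
    · -- disjoint unions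
      intro s hdisj hmeas hCs
      have hint_r : Integrable r μ := integrable_condExp
      rw [integral_iUnion (fun i => hm12 _ (hmeas i)) hdisj hint_r.integrableOn,
        integral_iUnion (fun i => hm12 _ (hmeas i)) hdisj he_int.integrableOn]
      exact tsum_congr hCs
  exact (ae_eq_condExp_of_forall_setIntegral_eq hm12 he_int
    (fun s _ _ => integrable_condExp.integrableOn)
    (fun s hs _ => key hs)
    ((hr_meas.mono hle).aestronglyMeasurable)).symm
end Helpers
/-- Factorization step: if `E[1_W | m'] = w` a.e. with `w` `m`-measurable, `m ≤ m'`, and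
`D ∈ m'`, then `E[1_{W ∩ D} | m] = w · E[1_D | m]` a.e. -/
lemma condexp_indicator_inter_factor
    {Ω : Type*} {m m' : MeasurableSpace Ω} [mΩ : MeasurableSpace Ω]
    (μ : Measure Ω) [IsProbabilityMeasure μ]
    (hle : m ≤ m') (hm' : m' ≤ mΩ)
    {W D : Set Ω} (hW : MeasurableSet[mΩ] W) (hD : MeasurableSet[m'] D)
    {w : Ω → ℝ} (hw : StronglyMeasurable[m] w) (hwbd : ∀ᵐ x ∂μ, ‖w x‖ ≤ 1)
    (hproj : μ[W.indicator (fun _ => (1:ℝ))|m'] =ᵐ[μ] w) :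
    μ[(W ∩ D).indicator (fun _ => (1:ℝ))|m]
      =ᵐ[μ] fun x => w x * (μ[D.indicator (fun _ => (1:ℝ))|m]) x := by
  have hm : m ≤ mΩ := hle.trans hm'
  have hDm : MeasurableSet[mΩ] D := hm' _ hD
  have hd_int : Integrable (D.indicator (fun _ => (1:ℝ))) μ :=
    (integrable_const (μ := μ) (1:ℝ)).indicator hDm
  have hw_int : Integrable (W.indicator (fun _ => (1:ℝ))) μ :=
    (integrable_const (μ := μ) (1:ℝ)).indicator hW
  have hwd_int : Integrable ((W ∩ D).indicator (fun _ => (1:ℝ))) μ :=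
    (integrable_const (μ := μ) (1:ℝ)).indicator (hW.inter hDm)
  have hg_meas : AEStronglyMeasurable[m]
      (fun x => w x * (μ[D.indicator (fun _ => (1:ℝ))|m]) x) μ :=
    (hw.mul stronglyMeasurable_condExp).aestronglyMeasurable
  have hg_int : Integrable (fun x => w x * (μ[D.indicator (fun _ => (1:ℝ))|m]) x) μ :=
    integrable_condExp.bdd_mul ((hw.mono hm).aestronglyMeasurable) hwbd
  refine (ae_eq_condExp_of_forall_setIntegral_eq hm hwd_int
    (fun s _ _ => hg_int.integrableOn) ?_ hg_meas).symm
  intro s hs _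
  have hsΩ : MeasurableSet[mΩ] s := hm _ hs
  have hsm' : MeasurableSet[m'] s := hle _ hs
  have hS_meas : StronglyMeasurable[m] (s.indicator (fun _ => (1:ℝ))) :=
    (stronglyMeasurable_const (β := ℝ)).indicator hs
  have hSw_meas : StronglyMeasurable[m]
      (fun x => s.indicator (fun _ => (1:ℝ)) x * w x) := hS_meas.mul hw
  have hSd_meas : StronglyMeasurable[m']
      (fun x => s.indicator (fun _ => (1:ℝ)) x * D.indicator (fun _ => (1:ℝ)) x) :=
    ((stronglyMeasurable_const (β := ℝ)).indicator hsm').mul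
      ((stronglyMeasurable_const (β := ℝ)).indicator hD)
  have hSw_bd : ∀ᵐ x ∂μ, ‖s.indicator (fun _ => (1:ℝ)) x * w x‖ ≤ 1 := by
    filter_upwards [hwbd] with x hx
    exact norm_mul_le_one (indicator_one_norm_le _ x) hx
  have hSd_bd : ∀ᵐ x ∂μ, ‖s.indicator (fun _ => (1:ℝ)) x
      * D.indicator (fun _ => (1:ℝ)) x‖ ≤ 1 := by
    filter_upwards with x
    exact norm_mul_le_one (indicator_one_norm_le _ x) (indicator_one_norm_le _ x)
  have hWD : ∀ x, (W ∩ D).indicator (fun _ => (1:ℝ)) x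
      = D.indicator (fun _ => (1:ℝ)) x * W.indicator (fun _ => (1:ℝ)) x := by
    intro x
    by_cases hx1 : x ∈ W <;> by_cases hx2 : x ∈ D <;>
      simp [Set.indicator_apply, hx1, hx2]
  calc ∫ x in s, w x * (μ[D.indicator (fun _ => (1:ℝ))|m]) x ∂μ
      = ∫ x, s.indicator (fun _ => (1:ℝ)) x
          * (w x * (μ[D.indicator (fun _ => (1:ℝ))|m]) x) ∂μ :=
        setIntegral_eq_integral_indicator_mul μ hsΩ _
    _ = ∫ x, (s.indicator (fun _ => (1:ℝ)) x * w x)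
          * (μ[D.indicator (fun _ => (1:ℝ))|m]) x ∂μ :=
        integral_congr_ae (Filter.Eventually.of_forall fun x => by ring)
    _ = ∫ x, (s.indicator (fun _ => (1:ℝ)) x * w x) * D.indicator (fun _ => (1:ℝ)) x ∂μ :=
        (integral_mul_condexp_aux μ hm hSw_meas hSw_bd hd_int).symm
    _ = ∫ x, (s.indicator (fun _ => (1:ℝ)) x * D.indicator (fun _ => (1:ℝ)) x) * w x ∂μ :=
        integral_congr_ae (Filter.Eventually.of_forall fun x => by ring)
    _ = ∫ x, (s.indicator (fun _ => (1:ℝ)) x * D.indicator (fun _ => (1:ℝ)) x)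
          * (μ[W.indicator (fun _ => (1:ℝ))|m']) x ∂μ := by
        refine integral_congr_ae ?_
        filter_upwards [hproj] with x hx
        rw [hx]
    _ = ∫ x, (s.indicator (fun _ => (1:ℝ)) x * D.indicator (fun _ => (1:ℝ)) x)
          * W.indicator (fun _ => (1:ℝ)) x ∂μ :=
        (integral_mul_condexp_aux μ hm' hSd_meas hSd_bd hw_int).symm
    _ = ∫ x, s.indicator (fun _ => (1:ℝ)) x * (W ∩ D).indicator (fun _ => (1:ℝ)) x ∂μ :=
        integral_congr_ae (Filter.Eventually.of_forall fun x => by simp only [hWD]; ring)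
    _ = ∫ x in s, (W ∩ D).indicator (fun _ => (1:ℝ)) x ∂μ :=
        (setIntegral_eq_integral_indicator_mul μ hsΩ _).symm
/-- In the mixture cure model, if `T₀ ⟂ (C, X) ∣ Z` and `B ⟂ (C, T₀, Z) ∣ X`, then the
survival time `T = B T₀ + (1 - B)·∞` (i.e. `T = T₀` if `B = 1` and `T = ∞` otherwise)
satisfies `T ⟂ C ∣ (X, Z)`. -/
theorem cure_model_cond_indep {Ω : Type*} [mΩ : MeasurableSpace Ω] [StandardBorelSpace Ω]
    [Nonempty Ω] {p q : ℕ}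
    (μ : Measure Ω) [IsProbabilityMeasure μ]
    (B : Ω → ℝ) (hBval : ∀ ω, B ω = 0 ∨ B ω = 1)
    (T0 C : Ω → ℝ≥0∞) (X : Ω → (Fin p → ℝ)) (Z : Ω → (Fin q → ℝ))
    (hB : Measurable B) (hT0 : Measurable T0) (hC : Measurable C)
    (hX : Measurable X) (hZ : Measurable Z)
    (T : Ω → ℝ≥0∞) (hT : ∀ ω, T ω = if B ω = 1 then T0 ω else ∞)
    (h1 : CondIndepFun (MeasurableSpace.comap Z inferInstance) hZ.comap_le
      T0 (fun ω => (C ω, X ω)) μ)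
    (h2 : CondIndepFun (MeasurableSpace.comap X inferInstance) hX.comap_le
      B (fun ω => (C ω, T0 ω, Z ω)) μ) :
    CondIndepFun (MeasurableSpace.comap (fun ω => (X ω, Z ω)) inferInstance)
      ((hX.prodMk hZ).comap_le) T C μ := by
  have hW1m : MeasurableSet (B ⁻¹' {1}) := hB (measurableSet_singleton 1)
  have hTm : Measurable T := by
    have : T = fun ω => if B ω = 1 then T0 ω else ∞ := funext hT
    rw [this]
    exact Measurable.ite hW1m hT0 measurable_const
  refine (condIndepFun_iff_condExp_inter_preimage_eq_mul hTm hC).2 ?_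
  intro S A hS hA
  -- abbreviations (sets and functions only)
  set W1 : Set Ω := B ⁻¹' {1} with hW1def
  set DS : Set Ω := T0 ⁻¹' S with hDSdef
  set DA : Set Ω := C ⁻¹' A with hDAdef
  -- σ-algebra inequalities
  have hmXZ : MeasurableSpace.comap (fun ω => (X ω, Z ω)) inferInstance ≤ mΩ :=
    (hX.prodMk hZ).comap_le
  have hmXW : MeasurableSpace.comap (fun ω => (X ω, (C ω, T0 ω, Z ω))) inferInstance ≤ mΩ :=
    (hX.prodMk (hC.prodMk (hT0.prodMk hZ))).comap_le
  have hmZV : MeasurableSpace.comap (fun ω => (Z ω, (C ω, X ω))) inferInstance ≤ mΩ :=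
    (hZ.prodMk (hC.prodMk hX)).comap_le
  have hle1 : MeasurableSpace.comap (fun ω => (X ω, Z ω)) inferInstance
      ≤ MeasurableSpace.comap (fun ω => (X ω, (C ω, T0 ω, Z ω))) inferInstance :=
    comap_proj_le (fun ω => (X ω, (C ω, T0 ω, Z ω))) (fun pr => (pr.1, pr.2.2.2))
      (measurable_fst.prodMk (measurable_snd.snd.snd))
  have hle2 : MeasurableSpace.comap (fun ω => (X ω, Z ω)) inferInstance
      ≤ MeasurableSpace.comap (fun ω => (Z ω, (C ω, X ω))) inferInstance :=
    comap_proj_le (fun ω => (Z ω, (C ω, X ω))) (fun pr => (pr.2.2, pr.1))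
      ((measurable_snd.snd).prodMk measurable_fst)
  have hleX : MeasurableSpace.comap X inferInstance
      ≤ MeasurableSpace.comap (fun ω => (X ω, Z ω)) inferInstance :=
    comap_proj_le (fun ω => (X ω, Z ω)) Prod.fst measurable_fst
  have hleZ : MeasurableSpace.comap Z inferInstance
      ≤ MeasurableSpace.comap (fun ω => (X ω, Z ω)) inferInstance :=
    comap_proj_le (fun ω => (X ω, Z ω)) Prod.snd measurable_snd
  -- the two projection (weak union) facts
  have hp : μ[W1.indicator (fun _ => (1:ℝ)) |
        MeasurableSpace.comap (fun ω => (X ω, (C ω, T0 ω, Z ω))) inferInstance]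
      =ᵐ[μ] μ[W1.indicator (fun _ => (1:ℝ)) | MeasurableSpace.comap X inferInstance] :=
    condexp_indicator_pair_eq μ hX (hC.prodMk (hT0.prodMk hZ)) hB h2
      (measurableSet_singleton (1:ℝ))
  have hq : μ[DS.indicator (fun _ => (1:ℝ)) |
        MeasurableSpace.comap (fun ω => (Z ω, (C ω, X ω))) inferInstance]
      =ᵐ[μ] μ[DS.indicator (fun _ => (1:ℝ)) | MeasurableSpace.comap Z inferInstance] :=
    condexp_indicator_pair_eq μ hZ (hC.prodMk hX) hT0 h1 hS
  set pX : Ω → ℝ := μ[W1.indicator (fun _ => (1:ℝ)) | MeasurableSpace.comap X inferInstance]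
    with hpXdef
  set qZ : Ω → ℝ := μ[DS.indicator (fun _ => (1:ℝ)) | MeasurableSpace.comap Z inferInstance]
    with hqZdef
  have hpX_meas : StronglyMeasurable[MeasurableSpace.comap (fun ω => (X ω, Z ω)) inferInstance]
      pX := (stronglyMeasurable_condExp).mono hleX
  have hqZ_meas : StronglyMeasurable[MeasurableSpace.comap (fun ω => (X ω, Z ω)) inferInstance]
      qZ := (stronglyMeasurable_condExp).mono hleZ
  have hpX_bd : ∀ᵐ x ∂μ, ‖pX x‖ ≤ 1 := by
    have hb : ∀ᵐ x ∂μ, |W1.indicator (fun _ => (1:ℝ)) x| ≤ ((1:ℝ≥0):ℝ) := by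
      filter_upwards with x
      simpa [Real.norm_eq_abs] using indicator_one_norm_le W1 x
    filter_upwards [ae_bdd_condExp_of_ae_bdd hb] with x hx
    simpa [Real.norm_eq_abs] using hx
  have hqZ_bd : ∀ᵐ x ∂μ, ‖qZ x‖ ≤ 1 := by
    have hb : ∀ᵐ x ∂μ, |DS.indicator (fun _ => (1:ℝ)) x| ≤ ((1:ℝ≥0):ℝ) := by
      filter_upwards with x
      simpa [Real.norm_eq_abs] using indicator_one_norm_le DS x
    filter_upwards [ae_bdd_condExp_of_ae_bdd hb] with x hx
    simpa [Real.norm_eq_abs] using hx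
  -- measurability of various sets w.r.t. the large σ-algebras
  have hDSDA_XW : MeasurableSet[MeasurableSpace.comap
      (fun ω => (X ω, (C ω, T0 ω, Z ω))) inferInstance] (DS ∩ DA) := by
    refine ⟨Set.univ ×ˢ (A ×ˢ (S ×ˢ Set.univ)), ?_, ?_⟩
    · exact MeasurableSet.univ.prod (hA.prod (hS.prod MeasurableSet.univ))
    · ext ω
      simp [hDSdef, hDAdef, Set.mem_prod, and_comm]
  have hDA_XW : MeasurableSet[MeasurableSpace.comap
      (fun ω => (X ω, (C ω, T0 ω, Z ω))) inferInstance] DA := by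
    refine ⟨Set.univ ×ˢ (A ×ˢ (Set.univ ×ˢ Set.univ)), ?_, ?_⟩
    · exact MeasurableSet.univ.prod (hA.prod (MeasurableSet.univ.prod MeasurableSet.univ))
    · ext ω
      simp [hDAdef, Set.mem_prod]
  have hDS_XW : MeasurableSet[MeasurableSpace.comap
      (fun ω => (X ω, (C ω, T0 ω, Z ω))) inferInstance] DS := by
    refine ⟨Set.univ ×ˢ (Set.univ ×ˢ (S ×ˢ Set.univ)), ?_, ?_⟩
    · exact MeasurableSet.univ.prod (MeasurableSet.univ.prod (hS.prod MeasurableSet.univ))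
    · ext ω
      simp [hDSdef, Set.mem_prod]
  have huniv_XW : MeasurableSet[MeasurableSpace.comap
      (fun ω => (X ω, (C ω, T0 ω, Z ω))) inferInstance] (Set.univ : Set Ω) :=
    ⟨Set.univ, MeasurableSet.univ, by simp⟩
  have hDA_ZV : MeasurableSet[MeasurableSpace.comap
      (fun ω => (Z ω, (C ω, X ω))) inferInstance] DA := by
    refine ⟨Set.univ ×ˢ (A ×ˢ Set.univ), ?_, ?_⟩
    · exact MeasurableSet.univ.prod (hA.prod MeasurableSet.univ)
    · ext ω
      simp [hDAdef, Set.mem_prod]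
  have huniv_ZV : MeasurableSet[MeasurableSpace.comap
      (fun ω => (Z ω, (C ω, X ω))) inferInstance] (Set.univ : Set Ω) :=
    ⟨Set.univ, MeasurableSet.univ, by simp⟩
  -- factorization facts
  have F1 : μ[(W1 ∩ (DS ∩ DA)).indicator (fun _ => (1:ℝ)) |
        MeasurableSpace.comap (fun ω => (X ω, Z ω)) inferInstance]
      =ᵐ[μ] fun x => pX x * (μ[(DS ∩ DA).indicator (fun _ => (1:ℝ)) |
        MeasurableSpace.comap (fun ω => (X ω, Z ω)) inferInstance]) x :=
    condexp_indicator_inter_factor μ hle1 hmXW hW1m hDSDA_XW hpX_meas hpX_bd hp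
  have F2 : μ[(W1 ∩ DA).indicator (fun _ => (1:ℝ)) |
        MeasurableSpace.comap (fun ω => (X ω, Z ω)) inferInstance]
      =ᵐ[μ] fun x => pX x * (μ[DA.indicator (fun _ => (1:ℝ)) |
        MeasurableSpace.comap (fun ω => (X ω, Z ω)) inferInstance]) x :=
    condexp_indicator_inter_factor μ hle1 hmXW hW1m hDA_XW hpX_meas hpX_bd hp
  have F3 : μ[(W1 ∩ DS).indicator (fun _ => (1:ℝ)) |
        MeasurableSpace.comap (fun ω => (X ω, Z ω)) inferInstance]
      =ᵐ[μ] fun x => pX x * (μ[DS.indicator (fun _ => (1:ℝ)) |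
        MeasurableSpace.comap (fun ω => (X ω, Z ω)) inferInstance]) x :=
    condexp_indicator_inter_factor μ hle1 hmXW hW1m hDS_XW hpX_meas hpX_bd hp
  have F4 : μ[(W1 ∩ Set.univ).indicator (fun _ => (1:ℝ)) |
        MeasurableSpace.comap (fun ω => (X ω, Z ω)) inferInstance]
      =ᵐ[μ] fun x => pX x * (μ[(Set.univ : Set Ω).indicator (fun _ => (1:ℝ)) |
        MeasurableSpace.comap (fun ω => (X ω, Z ω)) inferInstance]) x :=
    condexp_indicator_inter_factor μ hle1 hmXW hW1m huniv_XW hpX_meas hpX_bd hp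
  have G1 : μ[(DS ∩ DA).indicator (fun _ => (1:ℝ)) |
        MeasurableSpace.comap (fun ω => (X ω, Z ω)) inferInstance]
      =ᵐ[μ] fun x => qZ x * (μ[DA.indicator (fun _ => (1:ℝ)) |
        MeasurableSpace.comap (fun ω => (X ω, Z ω)) inferInstance]) x :=
    condexp_indicator_inter_factor μ hle2 hmZV (hT0 hS) hDA_ZV hqZ_meas hqZ_bd hq
  have G2 : μ[(DS ∩ Set.univ).indicator (fun _ => (1:ℝ)) |
        MeasurableSpace.comap (fun ω => (X ω, Z ω)) inferInstance]
      =ᵐ[μ] fun x => qZ x * (μ[(Set.univ : Set Ω).indicator (fun _ => (1:ℝ)) |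
        MeasurableSpace.comap (fun ω => (X ω, Z ω)) inferInstance]) x :=
    condexp_indicator_inter_factor μ hle2 hmZV (hT0 hS) huniv_ZV hqZ_meas hqZ_bd hq
  -- condexp of the constant 1
  have hone : μ[(Set.univ : Set Ω).indicator (fun _ => (1:ℝ)) |
      MeasurableSpace.comap (fun ω => (X ω, Z ω)) inferInstance] = fun _ => (1:ℝ) := by
    rw [Set.indicator_univ]
    exact condExp_const hmXZ 1
  -- simplified versions
  have hPB : μ[W1.indicator (fun _ => (1:ℝ)) |
        MeasurableSpace.comap (fun ω => (X ω, Z ω)) inferInstance] =ᵐ[μ] pX := by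
    have := F4
    rw [Set.inter_univ, hone] at this
    filter_upwards [this] with x hx
    simpa using hx
  have hPS : μ[DS.indicator (fun _ => (1:ℝ)) |
        MeasurableSpace.comap (fun ω => (X ω, Z ω)) inferInstance] =ᵐ[μ] qZ := by
    have := G2
    rw [Set.inter_univ, hone] at this
    filter_upwards [this] with x hx
    simpa using hx
  -- integrability of indicators
  have hint : ∀ {s : Set Ω}, MeasurableSet s → Integrable (s.indicator (fun _ => (1:ℝ))) μ :=
    fun hs => (integrable_const (μ := μ) (1:ℝ)).indicator hs
  by_cases hinf : (∞ : ℝ≥0∞) ∈ S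
  · -- cured patients have T = ∞ ∈ S
    have id1 : ∀ x, (T ⁻¹' S ∩ DA).indicator (fun _ => (1:ℝ)) x
        + (W1 ∩ DA).indicator (fun _ => (1:ℝ)) x
        = (W1 ∩ (DS ∩ DA)).indicator (fun _ => (1:ℝ)) x
          + DA.indicator (fun _ => (1:ℝ)) x := by
      intro x
      rcases hBval x with hb | hb
      · have hb1 : ¬ (B x = 1) := by rw [hb]; norm_num
        have hTx : T x = ∞ := by rw [hT x, if_neg hb1]
        by_cases hxA : x ∈ DA <;>
          simp [Set.indicator_apply, Set.mem_inter_iff, hxA, hW1def, hb1,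
            Set.mem_preimage, hTx, hinf]
      · have hTx : T x = T0 x := by rw [hT x, if_pos hb]
        by_cases hxA : x ∈ DA <;> by_cases hxS : T0 x ∈ S <;>
          simp [Set.indicator_apply, Set.mem_inter_iff, hxA, hW1def, hb,
            Set.mem_preimage, hTx, hxS, hDSdef]
    have id2 : ∀ x, (T ⁻¹' S).indicator (fun _ => (1:ℝ)) x
        + W1.indicator (fun _ => (1:ℝ)) x
        = (W1 ∩ DS).indicator (fun _ => (1:ℝ)) x + (1:ℝ) := by
      intro x
      rcases hBval x with hb | hb
      · have hb1 : ¬ (B x = 1) := by rw [hb]; norm_num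
        have hTx : T x = ∞ := by rw [hT x, if_neg hb1]
        simp [Set.indicator_apply, Set.mem_inter_iff, hW1def, hb1,
          Set.mem_preimage, hTx, hinf]
      · have hTx : T x = T0 x := by rw [hT x, if_pos hb]
        by_cases hxS : T0 x ∈ S <;>
          simp [Set.indicator_apply, Set.mem_inter_iff, hW1def, hb,
            Set.mem_preimage, hTx, hxS, hDSdef]
    -- conditional expectation versions
    have hfg1 : ((T ⁻¹' S ∩ DA).indicator (fun _ => (1:ℝ))
          + (W1 ∩ DA).indicator (fun _ => (1:ℝ)))
        = ((W1 ∩ (DS ∩ DA)).indicator (fun _ => (1:ℝ))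
          + DA.indicator (fun _ => (1:ℝ))) := funext fun x => id1 x
    have hadd1 := condExp_add (μ := μ)
      (m := MeasurableSpace.comap (fun ω => (X ω, Z ω)) inferInstance)
      (hint ((hTm hS).inter (hC hA))) (hint (hW1m.inter (hC hA)))
    have hadd2 := condExp_add (μ := μ)
      (m := MeasurableSpace.comap (fun ω => (X ω, Z ω)) inferInstance)
      (hint (hW1m.inter ((hT0 hS).inter (hC hA)))) (hint (hC hA))
    rw [← hfg1] at hadd2
    have hsum1 := hadd1.symm.trans hadd2
    have hfg2 : ((T ⁻¹' S).indicator (fun _ => (1:ℝ)) + W1.indicator (fun _ => (1:ℝ)))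
        = ((W1 ∩ DS).indicator (fun _ => (1:ℝ)) + fun _ => (1:ℝ)) := funext fun x => id2 x
    have hadd3 := condExp_add (μ := μ)
      (m := MeasurableSpace.comap (fun ω => (X ω, Z ω)) inferInstance)
      (hint (hTm hS)) (hint hW1m)
    have hadd4 := condExp_add (μ := μ)
      (m := MeasurableSpace.comap (fun ω => (X ω, Z ω)) inferInstance)
      (hint (hW1m.inter (hT0 hS))) (integrable_const (μ := μ) (1:ℝ))
    rw [← hfg2] at hadd4
    have hsum2 := hadd3.symm.trans hadd4
    have hconst : μ[(fun _ => (1:ℝ)) |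
        MeasurableSpace.comap (fun ω => (X ω, Z ω)) inferInstance] = fun _ => (1:ℝ) :=
      condExp_const hmXZ 1
    filter_upwards [hsum1, hsum2, F1, F2, F3, G1, hPB, hPS] with x e1 e2 f1 f2 f3 g1 pb ps
    simp only [Pi.add_apply, hconst] at e1 e2
    rw [f1, g1, f2] at e1
    rw [f3, ps, pb] at e2
    have ha : (μ[(T ⁻¹' S ∩ DA).indicator (fun _ => (1:ℝ)) |
        MeasurableSpace.comap (fun ω => (X ω, Z ω)) inferInstance]) x
        = pX x * (qZ x * (μ[DA.indicator (fun _ => (1:ℝ)) |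
          MeasurableSpace.comap (fun ω => (X ω, Z ω)) inferInstance]) x)
          + (μ[DA.indicator (fun _ => (1:ℝ)) |
          MeasurableSpace.comap (fun ω => (X ω, Z ω)) inferInstance]) x
          - pX x * (μ[DA.indicator (fun _ => (1:ℝ)) |
          MeasurableSpace.comap (fun ω => (X ω, Z ω)) inferInstance]) x := by linarith
    have ht : (μ[(T ⁻¹' S).indicator (fun _ => (1:ℝ)) |
        MeasurableSpace.comap (fun ω => (X ω, Z ω)) inferInstance]) x
        = pX x * qZ x + 1 - pX x := by linarith
    rw [ha, ht]
    ring
  · -- no cured patients in S : T ⁻¹' S = {B = 1} ∩ T0 ⁻¹' S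
    have hTS : T ⁻¹' S = W1 ∩ DS := by
      ext x
      rcases hBval x with hb | hb
      · have hb1 : ¬ (B x = 1) := by rw [hb]; norm_num
        have hTx : T x = ∞ := by rw [hT x, if_neg hb1]
        simp [Set.mem_preimage, hTx, hinf, hW1def, hb1, Set.mem_inter_iff]
      · have hTx : T x = T0 x := by rw [hT x, if_pos hb]
        simp [Set.mem_preimage, hTx, hW1def, hb, Set.mem_inter_iff, hDSdef]
    rw [hTS, Set.inter_assoc]
    filter_upwards [F1, F3, G1, hPS] with x f1 f3 g1 ps
    rw [f1, g1, f3, ps]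
    ring
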